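/- 𝐈ℕ∞ is an F-inverse semigroup: for every α ∈ 𝐈ℕ∞ the 𝔠_mg-equivalence class of α contains a greatest element with respect to the natural partial order ≼, namely the unique maximal-domain partial isometry α_m with the same translation integer z_α (explicitly: if z_α < 0 then α_m has domain { n ∈ ℕ : n ≥ −z_α + 1 } and range ℕ; if z_α = 0 then α_m = 𝕀; if z_α > 0 then α_m has domain ℕ and range { n ∈ ℕ : n ≥ z_α + 1 }; in each case α_m(n) = n + z_α). -/

import Mathlib

/-- Partial transformations of the set ℕ of positive integers. -/
abbrev PMapN : Type := ℕ+ → Option ℕ+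

/-- The domain of a partial transformation. -/
def pdom (f : PMapN) : Set ℕ+ := {n | f n ≠ none}

/-- The range of a partial transformation. -/
def pran (f : PMapN) : Set ℕ+ := {m | ∃ n, f n = some m}

/-- Composition of partial transformations: `pmul f g` applies `g` first and then `f`. -/
def pmul (f g : PMapN) : PMapN := fun n => (g n).bind f

/-- The identity transformation 𝕀 of ℕ. -/
def pid : PMapN := fun n => some n

/-- `f` is a partial bijection (an injective partial map). -/
def IsPartialBij (f : PMapN) : Prop :=
  ∀ ⦃m n a⦄, f m = some a → f n = some a → m = n

/-- `f` is a partial isometry with respect to the metric `d(m, n) = |m - n|`. -/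
def IsIsometry (f : PMapN) : Prop :=
  ∀ ⦃m n a b⦄, f m = some a → f n = some b →
    |((a : ℕ) : ℤ) - ((b : ℕ) : ℤ)| = |((m : ℕ) : ℤ) - ((n : ℕ) : ℤ)|

/-- Membership in the inverse monoid `𝐈ℕ∞` of partial cofinite isometries of ℕ:
a partial bijection of ℕ with cofinite domain and cofinite range preserving distances. -/
def InIN (f : PMapN) : Prop :=
  IsPartialBij f ∧ (pdom f)ᶜ.Finite ∧ (pran f)ᶜ.Finite ∧ IsIsometry f

/-- The least group congruence `𝔠_mg` on the inverse semigroup `𝐈ℕ∞`: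
`a 𝔠_mg b` iff `ea = eb` for some idempotent `e ∈ 𝐈ℕ∞`. -/
def Cmg (a b : PMapN) : Prop :=
  ∃ e, InIN e ∧ pmul e e = e ∧ pmul e a = pmul e b

/-- The natural partial order on the inverse semigroup `𝐈ℕ∞`:
`a ≼ b` iff `a = be` for some idempotent `e ∈ 𝐈ℕ∞`. -/
def NatLe (a b : PMapN) : Prop :=
  ∃ e, InIN e ∧ pmul e e = e ∧ a = pmul b e

/-- The partial translation `n ↦ n + z` of ℕ with the maximal possible domain:
all `n` with `n + z ≥ 1`. -/
noncomputable def maxShift (z : ℤ) : PMapN := fun n =>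
  if h : 1 ≤ ((n : ℕ) : ℤ) + z then some ⟨(((n : ℕ) : ℤ) + z).toNat, by omega⟩ else none

-- helpers
lemma maxShift_eq_some {z : ℤ} {n a : ℕ+} :
    maxShift z n = some a ↔ ((a : ℕ) : ℤ) = ((n : ℕ) : ℤ) + z := by
  have ha : (0:ℕ) < (a:ℕ) := a.2
  unfold maxShift
  split
  · rename_i h
    constructor
    · intro hs
      have h2 : ((((n : ℕ) : ℤ) + z).toNat : ℕ) = (a : ℕ) :=
        congrArg PNat.val (Option.some_injective _ hs)
      omega
    · intro hc
      congr 1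
      apply PNat.coe_injective
      show ((((n : ℕ) : ℤ) + z).toNat : ℕ) = (a : ℕ)
      omega
  · rename_i h
    constructor
    · intro hs; exact nomatch hs
    · intro hc; exfalso; omega

lemma maxShift_ne_none {z : ℤ} {n : ℕ+} :
    maxShift z n ≠ none ↔ 1 ≤ ((n : ℕ) : ℤ) + z := by
  unfold maxShift
  split <;> simp_all

lemma finite_coe_le (k : ℕ) : {n : ℕ+ | (n : ℕ) ≤ k}.Finite :=
  (Set.finite_Iic k).preimage (fun a _ b _ h => PNat.coe_injective h)

open Classical in
noncomputable def pidOn (E : Set ℕ+) : PMapN :=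
  fun n => if n ∈ E then some n else none

lemma pidOn_eq_some {E : Set ℕ+} {n m : ℕ+} (h : pidOn E n = some m) : m = n ∧ n ∈ E := by
  unfold pidOn at h
  split at h
  · cases h; exact ⟨rfl, by assumption⟩
  · exact nomatch h

lemma pidOn_mem {E : Set ℕ+} {n : ℕ+} (h : n ∈ E) : pidOn E n = some n := by
  simp [pidOn, h]

lemma pidOn_not_mem {E : Set ℕ+} {n : ℕ+} (h : n ∉ E) : pidOn E n = none := by
  simp [pidOn, h]

lemma pidOn_idem (E : Set ℕ+) : pmul (pidOn E) (pidOn E) = pidOn E := by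
  funext n
  by_cases h : n ∈ E
  · simp [pmul, pidOn_mem h]
  · simp [pmul, pidOn_not_mem h]

lemma pdom_pidOn (E : Set ℕ+) : pdom (pidOn E) = E := by
  ext n
  by_cases h : n ∈ E
  · simp [pdom, pidOn_mem h, h]
  · simp [pdom, pidOn_not_mem h, h]

lemma pran_pidOn (E : Set ℕ+) : pran (pidOn E) = E := by
  ext m
  constructor
  · rintro ⟨n, hn⟩
    obtain ⟨rfl, h⟩ := pidOn_eq_some hn
    exact h
  · intro h; exact ⟨m, pidOn_mem h⟩

lemma pidOn_inIN {E : Set ℕ+} (h : Eᶜ.Finite) : InIN (pidOn E) := by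
  refine ⟨?_, ?_, ?_, ?_⟩
  · intro m n a hm hn
    exact ((pidOn_eq_some hm).1).symm.trans (pidOn_eq_some hn).1
  · rwa [pdom_pidOn]
  · rwa [pran_pidOn]
  · intro m n a b hm hn
    rw [(pidOn_eq_some hm).1, (pidOn_eq_some hn).1]

lemma idem_fix {e : PMapN} (he : InIN e) (hee : pmul e e = e) {n m : ℕ+}
    (h : e n = some m) : m = n := by
  have h2 : e m = some m := by
    have h3 := congrFun hee n
    rw [pmul, h] at h3
    simpa [h] using h3
  exact (he.1 h h2).symm

lemma inIN_maxShift (z : ℤ) : InIN (maxShift z) := by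
  refine ⟨?_, ?_, ?_, ?_⟩
  · intro m n a hm hn
    have h1 := maxShift_eq_some.mp hm
    have h2 := maxShift_eq_some.mp hn
    exact PNat.coe_injective (by omega)
  · apply (finite_coe_le (-z).toNat).subset
    intro n hn
    have h1 : ¬ (1 ≤ ((n:ℕ):ℤ) + z) := fun h => hn (maxShift_ne_none.mpr h)
    have h2 : (0:ℕ) < (n:ℕ) := n.2
    show (n:ℕ) ≤ (-z).toNat
    omega
  · apply (finite_coe_le z.toNat).subset
    intro m hm
    have h2 : (0:ℕ) < (m:ℕ) := m.2
    show (m:ℕ) ≤ z.toNat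
    by_contra hc
    refine hm ⟨⟨(((m:ℕ):ℤ) - z).toNat, by omega⟩, maxShift_eq_some.mpr ?_⟩
    show ((m:ℕ):ℤ) = ((((((m:ℕ):ℤ) - z).toNat : ℕ)) : ℤ) + z
    omega
  · intro m n a b hm hn
    have h1 := maxShift_eq_some.mp hm
    have h2 := maxShift_eq_some.mp hn
    have h3 : ((a:ℕ):ℤ) - ((b:ℕ):ℤ) = ((m:ℕ):ℤ) - ((n:ℕ):ℤ) := by omega
    rw [h3]

lemma maxShift_zero : maxShift 0 = pid := by
  funext n
  show maxShift 0 n = some n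
  exact maxShift_eq_some.mpr (by simp)

lemma pdom_maxShift_neg {z : ℤ} (hz : z < 0) :
    pdom (maxShift z) = {n : ℕ+ | -z + 1 ≤ ((n : ℕ) : ℤ)} := by
  ext n
  constructor
  · intro h
    have := maxShift_ne_none.mp h
    show -z + 1 ≤ ((n:ℕ):ℤ)
    omega
  · intro h
    exact maxShift_ne_none.mpr (by have : -z + 1 ≤ ((n:ℕ):ℤ) := h; omega)

lemma pran_maxShift_neg {z : ℤ} (hz : z < 0) : pran (maxShift z) = Set.univ := by
  ext m
  simp only [Set.mem_univ, iff_true]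
  have h2 : (0:ℕ) < (m:ℕ) := m.2
  refine ⟨⟨(((m:ℕ):ℤ) - z).toNat, by omega⟩, maxShift_eq_some.mpr ?_⟩
  show ((m:ℕ):ℤ) = ((((((m:ℕ):ℤ) - z).toNat : ℕ)) : ℤ) + z
  omega

lemma pdom_maxShift_pos {z : ℤ} (hz : 0 < z) : pdom (maxShift z) = Set.univ := by
  ext n
  simp only [Set.mem_univ, iff_true]
  have h2 : (0:ℕ) < (n:ℕ) := n.2
  exact maxShift_ne_none.mpr (by omega)

lemma pran_maxShift_pos {z : ℤ} (hz : 0 < z) :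
    pran (maxShift z) = {n : ℕ+ | z + 1 ≤ ((n : ℕ) : ℤ)} := by
  ext m
  constructor
  · rintro ⟨n, hn⟩
    have h1 := maxShift_eq_some.mp hn
    have h2 : (0:ℕ) < (n:ℕ) := n.2
    show z + 1 ≤ ((m:ℕ):ℤ)
    omega
  · intro h
    have h1 : z + 1 ≤ ((m:ℕ):ℤ) := h
    refine ⟨⟨(((m:ℕ):ℤ) - z).toNat, by omega⟩, maxShift_eq_some.mpr ?_⟩
    show ((m:ℕ):ℤ) = ((((((m:ℕ):ℤ) - z).toNat : ℕ)) : ℤ) + z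
    omega

section Main

variable {α : PMapN} {z : ℤ}

lemma cmg_maxShift (hα : InIN α)
    (hz : ∀ n a, α n = some a → ((a : ℕ) : ℤ) = ((n : ℕ) : ℤ) + z) :
    Cmg α (maxShift z) := by
  refine ⟨pidOn (pran α), pidOn_inIN hα.2.2.1, pidOn_idem _, ?_⟩
  have heα : pmul (pidOn (pran α)) α = α := by
    funext n
    cases h : α n with
    | none => simp [pmul, h]
    | some a =>
      have hmem : a ∈ pran α := ⟨n, h⟩
      simp [pmul, h, pidOn_mem hmem]
  have heM : pmul (pidOn (pran α)) (maxShift z) = α := by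
    funext n
    cases h : α n with
    | some a =>
      have hm : maxShift z n = some a := maxShift_eq_some.mpr (hz n a h)
      have hmem : a ∈ pran α := ⟨n, h⟩
      simp [pmul, hm, pidOn_mem hmem, h]
    | none =>
      cases h2 : maxShift z n with
      | none => simp [pmul, h2, h]
      | some a =>
        have ha : a ∉ pran α := by
          rintro ⟨k, hk⟩
          have h3 := hz k a hk
          have h4 := maxShift_eq_some.mp h2
          have : k = n := PNat.coe_injective (by omega)
          rw [this, h] at hk
          exact nomatch hk
        simp [pmul, h2, pidOn_not_mem ha, h]
  rw [heα, heM]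

lemma greatest (hα : InIN α)
    (hz : ∀ n a, α n = some a → ((a : ℕ) : ℤ) = ((n : ℕ) : ℤ) + z)
    (β : PMapN) (hβ : InIN β) (hc : Cmg α β) : NatLe β (maxShift z) := by
  obtain ⟨e, he, hee, heq⟩ := hc
  set S : Set ℕ+ := {n | ∃ m, α n = some m ∧ e m = some m} with hS
  have hScompl : Sᶜ.Finite := by
    have hsub : Sᶜ ⊆ (pdom α)ᶜ ∪ (α ⁻¹' (Option.some '' (pdom e)ᶜ)) := by
      intro n hn
      cases h : α n with
      | none => exact Or.inl (fun hd => hd h)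
      | some a =>
        right
        have hea : e a = none := by
          cases h2 : e a with
          | none => rfl
          | some k =>
            have : k = a := idem_fix he hee h2
            rw [this] at h2
            exact absurd ⟨a, h, h2⟩ hn
        exact ⟨a, fun hd => hd hea, h.symm⟩
    refine (hα.2.1.union (Set.Finite.preimage ?_ (he.2.1.image Option.some))).subset hsub
    intro n1 h1 n2 h2 hne
    obtain ⟨a, -, ha⟩ := h1
    exact hα.1 ha.symm (hne ▸ ha.symm)
  have hSinf : S.Infinite := by
    have := hScompl.infinite_compl
    rwa [compl_compl] at this
  have hβS : ∀ n ∈ S, ∃ m, β n = some m ∧ ((m:ℕ):ℤ) = ((n:ℕ):ℤ) + z := by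
    rintro n ⟨m, ham, hem⟩
    have h1 := congrFun heq n
    simp only [pmul, ham] at h1
    rw [Option.bind_some, hem] at h1
    cases h2 : β n with
    | none => rw [h2] at h1; simp at h1
    | some b =>
      rw [h2] at h1
      rw [Option.bind_some] at h1
      have : m = b := idem_fix he hee h1.symm
      exact ⟨m, by rw [this], hz n m ham⟩
  have hβz : ∀ n b, β n = some b → ((b:ℕ):ℤ) = ((n:ℕ):ℤ) + z := by
    intro n b hβn
    obtain ⟨m1, hm1S, m2, hm2S, hne⟩ := hSinf.nontrivial
    obtain ⟨c1, hc1, hc1z⟩ := hβS m1 hm1S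
    obtain ⟨c2, hc2, hc2z⟩ := hβS m2 hm2S
    have i1 := hβ.2.2.2 hβn hc1
    have i2 := hβ.2.2.2 hβn hc2
    rcases abs_eq_abs.mp i1 with h | h <;> rcases abs_eq_abs.mp i2 with h' | h'
    · omega
    · omega
    · omega
    · exact absurd (PNat.coe_injective (show (m1:ℕ) = (m2:ℕ) by omega)) hne
  refine ⟨pidOn (pdom β), pidOn_inIN hβ.2.1, pidOn_idem _, ?_⟩
  funext n
  cases h : β n with
  | none =>
    have : n ∉ pdom β := fun hd => hd h
    simp [pmul, pidOn_not_mem this]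
  | some b =>
    have hd : n ∈ pdom β := fun hd => Option.some_ne_none b (h ▸ hd)
    simp [pmul, pidOn_mem hd, maxShift_eq_some.mpr (hβz n b h)]

end Main

/-- `𝐈ℕ∞` is an F-inverse semigroup: for every `α ∈ 𝐈ℕ∞` (with
translation integer `z`, i.e. `α(n) = n + z` on `dom α`) the `𝔠_mg`-class of `α` has a
greatest element w.r.t. the natural partial order `≼`, namely the maximal-domain partial
isometry `α_m = maxShift z`: if `z < 0` it has domain `{n : n ≥ -z + 1}` and range ℕ,
if `z = 0` it is the identity `𝕀`, and if `z > 0` it has domain ℕ and range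
`{n : n ≥ z + 1}`; in each case `α_m(n) = n + z`. -/
theorem stmt14 (α : PMapN) (hα : InIN α) (z : ℤ)
    (hz : ∀ n a, α n = some a → ((a : ℕ) : ℤ) = ((n : ℕ) : ℤ) + z) :
    InIN (maxShift z) ∧
    (∀ n a, maxShift z n = some a → ((a : ℕ) : ℤ) = ((n : ℕ) : ℤ) + z) ∧
    (z = 0 → maxShift z = pid) ∧
    (z < 0 → pdom (maxShift z) = {n : ℕ+ | -z + 1 ≤ ((n : ℕ) : ℤ)} ∧
      pran (maxShift z) = Set.univ) ∧
    (0 < z → pdom (maxShift z) = Set.univ ∧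
      pran (maxShift z) = {n : ℕ+ | z + 1 ≤ ((n : ℕ) : ℤ)}) ∧
    Cmg α (maxShift z) ∧
    (∀ β, InIN β → Cmg α β → NatLe β (maxShift z)) := by
  refine ⟨inIN_maxShift z, fun n a h => maxShift_eq_some.mp h,
    fun h0 => by subst h0; exact maxShift_zero,
    fun hneg => ⟨pdom_maxShift_neg hneg, pran_maxShift_neg hneg⟩,
    fun hpos => ⟨pdom_maxShift_pos hpos, pran_maxShift_pos hpos⟩,
    cmg_maxShift hα hz, fun β hβ hc => greatest hα hz β hβ hc⟩
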